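/- Let t > 2 be an integer and k ≥ 3 an odd integer. Then the radio k-labeling number of the infinite distance graph D(t-1,t) satisfies rl_k(D(t-1,t)) ≤ (t/2)k² + k - (t+2)/2. -/

import Mathlib

/-- The infinite distance graph on `ℤ` with distance set `D`: distinct integers
`i, j` are adjacent iff `|i - j| ∈ D`. -/
def distGraph (D : Set ℤ) : SimpleGraph ℤ where
  Adj i j := i ≠ j ∧ |i - j| ∈ D
  symm := by
    refine ⟨?_⟩
    intro i j h
    exact ⟨h.1.symm, by rw [abs_sub_comm]; exact h.2⟩
  loopless := by
    refine ⟨?_⟩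
    intro i h
    exact h.1 rfl

/-- `c : ℤ → ℕ` is a radio `k`-labeling of the graph `G` on `ℤ`:
`|c(u) - c(v)| ≥ k + 1 - d(u,v)` for all distinct `u, v`. -/
def IsRadioLabeling (G : SimpleGraph ℤ) (k : ℕ) (c : ℤ → ℕ) : Prop :=
  ∀ x y : ℤ, x ≠ y → (k : ℤ) + 1 - G.dist x y ≤ |(c x : ℤ) - c y|

lemma Gadj_abs {t : ℕ} {x y : ℤ}
    (h : (distGraph {(t : ℤ) - 1, (t : ℤ)}).Adj x y) :
    |x - y| = (t : ℤ) - 1 ∨ |x - y| = (t : ℤ) := by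
  simpa using h.2

lemma walk_len {t : ℕ} {x y : ℤ} (w : (distGraph {(t : ℤ) - 1, (t : ℤ)}).Walk x y) :
    |x - y| ≤ t * w.length := by
  induction w with
  | nil => simp
  | @cons a b c hadj w ih =>
    have h1 : |a - b| ≤ (t : ℤ) := by
      rcases Gadj_abs hadj with h | h <;> omega
    calc |a - c| ≤ |a - b| + |b - c| := abs_sub_le a b c
      _ ≤ t + t * w.length := add_le_add h1 ih
      _ = t * (SimpleGraph.Walk.cons hadj w).length := by
          simp [SimpleGraph.Walk.length_cons]; ring

lemma Gadj_add {t : ℕ} (ht : 2 < t) (x : ℤ) :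
    (distGraph {(t : ℤ) - 1, (t : ℤ)}).Adj x (x + t) := by
  refine ⟨by omega, ?_⟩
  simp only [Set.mem_insert_iff, Set.mem_singleton_iff]
  right
  rw [abs_sub_comm]
  simp

lemma Greach_succ {t : ℕ} (ht : 2 < t) (x : ℤ) :
    (distGraph {(t : ℤ) - 1, (t : ℤ)}).Reachable x (x + 1) := by
  have h1 := Gadj_add ht x
  have h2 : (distGraph {(t : ℤ) - 1, (t : ℤ)}).Adj (x + t) (x + 1) := by
    refine ⟨by omega, ?_⟩
    simp only [Set.mem_insert_iff, Set.mem_singleton_iff]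
    left
    rw [abs_of_nonneg (by omega : (0:ℤ) ≤ x + t - (x + 1))]
    ring
  exact h1.reachable.trans h2.reachable

lemma Greach {t : ℕ} (ht : 2 < t) (x y : ℤ) :
    (distGraph {(t : ℤ) - 1, (t : ℤ)}).Reachable x y := by
  have key : ∀ (x : ℤ) (n : ℕ), (distGraph {(t : ℤ) - 1, (t : ℤ)}).Reachable x (x + n) := by
    intro x n
    induction n with
    | zero => simpa using SimpleGraph.Reachable.refl x
    | succ n ih =>
      have := (ih.trans (Greach_succ ht (x + n)))
      simpa [add_assoc] using this
  rcases le_total x y with h | h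
  · have := key x (y - x).toNat
    rwa [Int.toNat_of_nonneg (by omega), show x + (y - x) = y by ring] at this
  · have := key y (x - y).toNat
    rw [Int.toNat_of_nonneg (by omega), show y + (x - y) = x by ring] at this
    exact this.symm

lemma Gdist_pos {t : ℕ} (ht : 2 < t) {x y : ℤ} (h : x ≠ y) :
    1 ≤ (distGraph {(t : ℤ) - 1, (t : ℤ)}).dist x y :=
  (Greach ht x y).pos_dist_of_ne h

lemma Gdist_mul {t : ℕ} (ht : 2 < t) (x y : ℤ) :
    |x - y| ≤ t * (distGraph {(t : ℤ) - 1, (t : ℤ)}).dist x y := by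
  obtain ⟨w, hw⟩ := (Greach ht x y).exists_walk_length_eq_dist
  have := walk_len w
  rwa [hw] at this

lemma Gdist_two {t : ℕ} (ht : 2 < t) {x y : ℤ} (h : x ≠ y)
    (h2 : ¬ (distGraph {(t : ℤ) - 1, (t : ℤ)}).Adj x y) :
    2 ≤ (distGraph {(t : ℤ) - 1, (t : ℤ)}).dist x y := by
  have h1 := Gdist_pos ht h
  have : (distGraph {(t : ℤ) - 1, (t : ℤ)}).dist x y ≠ 1 := by
    intro hc
    exact h2 (SimpleGraph.dist_eq_one_iff_adj.mp hc)
  omega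

lemma emod_neg' {P b : ℤ} (_hP : 0 < P) (h1 : -P ≤ b) (h2 : b < 0) : b % P = b + P := by
  have h3 : (b + P) % P = b % P := by
    conv_lhs => rw [show b + P = b + P * 1 by ring]
    exact Int.add_mul_emod_self_left b P 1
  rw [← h3, Int.emod_eq_of_lt (by omega) (by omega)]

lemma resid_lb {P a b : ℤ} (hP : 0 < P) (h : a % P = b) :
    b ≤ |a| ∨ P - b ≤ |a| := by
  have hb0 : 0 ≤ b := h ▸ Int.emod_nonneg a (by omega)
  have hbP : b < P := h ▸ Int.emod_lt_of_pos a hP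
  rcases abs_cases a with ⟨he, h0⟩ | ⟨he, h0⟩
  · left
    rw [he]
    by_contra hc
    push_neg at hc
    rw [Int.emod_eq_of_lt h0 (by omega)] at h
    omega
  · right
    rw [he]
    by_contra hc
    push_neg at hc
    rw [emod_neg' hP (by omega) (by omega)] at h
    omega

/-- For `t > 2` and odd `k ≥ 3`, `rl_k(D(t-1,t)) ≤ (t/2)k² + k - (t+2)/2`. -/
theorem radio_upper_Dtsub1t (t k : ℕ) (ht : 2 < t) (hk : 3 ≤ k) (hko : Odd k) :
    ∃ c : ℤ → ℕ, IsRadioLabeling (distGraph {(t : ℤ) - 1, (t : ℤ)}) k c ∧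
      ∀ x : ℤ, (c x : ℝ) ≤ ((t : ℝ) / 2) * (k : ℝ) ^ 2 + k - ((t : ℝ) + 2) / 2 := by
  obtain ⟨m, hm⟩ := hko
  have hm1 : 1 ≤ m := by omega
  have hT3 : 3 ≤ (t : ℤ) := by exact_mod_cast ht
  set M : ℤ := (m : ℤ) with hMdef
  have hM1 : 1 ≤ M := by simp only [hMdef]; exact_mod_cast hm1
  have hM0 : (0:ℤ) ≤ M := by omega
  have hkM : (k : ℤ) = 2 * M + 1 := by rw [hm]; push_cast; ring
  set E : ℤ := (t : ℤ) * (M + 1) with hEdef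
  have hE2T : 2 * (t : ℤ) ≤ E := by
    have := mul_le_mul_of_nonneg_left (show (2:ℤ) ≤ M + 1 by omega)
      (show (0:ℤ) ≤ (t:ℤ) by positivity)
    linarith [this]
  set A : ℤ := E + 2 with hAdef
  set P : ℤ := 2 * E + 3 with hPdef
  have hP0 : 0 < P := by omega
  have hr0 : ∀ z : ℤ, 0 ≤ z % P := fun z => Int.emod_nonneg z (by omega)
  have hrP : ∀ z : ℤ, z % P < P := fun z => Int.emod_lt_of_pos z hP0
  refine ⟨fun x => ((if x % P < A then 2 * (x % P) else 2 * (x % P - A) + 1) * M).toNat, ?_, ?_⟩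
  · unfold IsRadioLabeling
    intro x y hxy
    simp only []
    have hrx0 := hr0 x
    have hrxP := hrP x
    have hry0 := hr0 y
    have hryP := hrP y
    have hsub : (x - y) % P = (x % P - y % P) % P := by rw [Int.sub_emod]
    have hD1n : 1 ≤ (distGraph {(t : ℤ) - 1, (t : ℤ)}).dist x y := Gdist_pos ht hxy
    have hdq : |x - y| ≤ (t : ℤ) * ((distGraph {(t : ℤ) - 1, (t : ℤ)}).dist x y : ℤ) := by
      exact_mod_cast Gdist_mul ht x y
    set rx := x % P with hrxdef
    set ry := y % P with hrydef
    set d : ℕ := (distGraph {(t : ℤ) - 1, (t : ℤ)}).dist x y with hd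
    have hD1 : (1:ℤ) ≤ (d:ℤ) := by exact_mod_cast hD1n
    have hgx0 : (0:ℤ) ≤ (if rx < A then 2 * rx else 2 * (rx - A) + 1) * M := by
      apply mul_nonneg _ hM0
      split_ifs with h <;> omega
    have hgy0 : (0:ℤ) ≤ (if ry < A then 2 * ry else 2 * (ry - A) + 1) * M := by
      apply mul_nonneg _ hM0
      split_ifs with h <;> omega
    rw [Int.toNat_of_nonneg hgx0, Int.toNat_of_nonneg hgy0, ← sub_mul, abs_mul,
      abs_of_nonneg hM0]
    have key : ∀ u : ℤ, 3 ≤ |u| → (k:ℤ) + 1 - (d:ℤ) ≤ |u| * M := by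
      intro u hu
      have h3 := mul_le_mul_of_nonneg_right hu hM0
      rw [hkM]
      linarith
    -- case |Δf| = 0 tool
    have tool0 : rx = ry → (k:ℤ) + 1 - (d:ℤ) ≤ 0 := by
      intro h0
      have hz : (x - y) % P = 0 := by
        rw [hsub, h0, sub_self]
        simp
      have hdvd : P ∣ (x - y) := Int.dvd_of_emod_eq_zero hz
      have habs : P ≤ |x - y| :=
        Int.le_of_dvd (abs_pos.mpr (sub_ne_zero.mpr hxy)) ((dvd_abs P (x - y)).mpr hdvd)
      have h1 : (t:ℤ) * (2 * M + 2) < (t:ℤ) * (d:ℤ) := by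
        have he : (t:ℤ) * (2 * M + 2) = 2 * E := by rw [hEdef]; ring
        rw [he]
        linarith
      have hD : 2 * M + 2 < (d:ℤ) := lt_of_mul_lt_mul_left h1 (by positivity)
      rw [hkM]
      linarith
    -- case |Δf| = 2 tool : |rx - ry| = 1 gives dist ≥ 2
    have tool2 : (rx - ry = 1 ∨ ry - rx = 1) → (2:ℤ) ≤ (d:ℤ) := by
      intro h1
      have hb : (x - y) % P = 1 ∨ (x - y) % P = P - 1 := by
        rcases h1 with h | h
        · left
          rw [hsub, show rx - ry = 1 by omega, Int.emod_eq_of_lt (by omega) (by omega)]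
        · right
          rw [hsub, show rx - ry = -1 by omega, emod_neg' hP0 (by omega) (by omega)]
          ring
      have hnadj : ¬ (distGraph {(t : ℤ) - 1, (t : ℤ)}).Adj x y := by
        intro hadj
        have h4 : x - y = (t:ℤ) - 1 ∨ x - y = 1 - (t:ℤ) ∨ x - y = (t:ℤ) ∨ x - y = -(t:ℤ) := by
          rcases Gadj_abs hadj with h5 | h5 <;>
            rcases abs_cases (x - y) with ⟨h6, h7⟩ | ⟨h6, h7⟩ <;> omega
        rcases h4 with h5 | h5 | h5 | h5
        · rw [h5, Int.emod_eq_of_lt (by omega) (by omega)] at hb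
          omega
        · rw [h5, emod_neg' hP0 (by omega) (by omega)] at hb
          omega
        · rw [h5, Int.emod_eq_of_lt (by omega) (by omega)] at hb
          omega
        · rw [h5, emod_neg' hP0 (by omega) (by omega)] at hb
          omega
      have := Gdist_two ht hxy hnadj
      rw [← hd] at this
      exact_mod_cast this
    -- case |Δf| = 1 tool : (x-y) % P ∈ {A-1, A} gives dist ≥ M + 2
    have tool1 : ((x - y) % P = A - 1 ∨ (x - y) % P = A) → M + 2 ≤ (d:ℤ) := by
      intro hb
      have habs : A - 1 ≤ |x - y| := by
        rcases hb with hb | hb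
        · rcases resid_lb hP0 hb with h | h <;> omega
        · rcases resid_lb hP0 hb with h | h <;> omega
      have h1 : (t:ℤ) * (M + 1) < (t:ℤ) * (d:ℤ) := by
        have he : (t:ℤ) * (M + 1) = E := hEdef.symm
        rw [he]
        omega
      have hD : M + 1 < (d:ℤ) := lt_of_mul_lt_mul_left h1 (by positivity)
      omega
    by_cases hbx : rx < A <;> by_cases hby : ry < A
    · rw [if_pos hbx, if_pos hby]
      by_cases h0 : rx = ry
      · have := tool0 h0
        have h2 : (0:ℤ) ≤ |2 * rx - 2 * ry| * M := mul_nonneg (abs_nonneg _) hM0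
        linarith
      · by_cases h1 : rx - ry = 1 ∨ ry - rx = 1
        · have hD2 := tool2 h1
          have habs : |2 * rx - 2 * ry| = 2 := by
            have : 2 * rx - 2 * ry = 2 ∨ 2 * rx - 2 * ry = -2 := by omega
            rcases this with h | h <;> rw [h] <;> norm_num
          rw [habs, hkM]
          linarith
        · exact key _ (le_abs.mpr (by omega))
    · rw [if_pos hbx, if_neg hby]
      by_cases hw : rx - ry + A = 0 ∨ rx - ry + A = 1
      · have hb : (x - y) % P = A - 1 ∨ (x - y) % P = A := by
          rcases hw with h | h
          · left
            rw [hsub, show rx - ry = -A by omega, emod_neg' hP0 (by omega) (by omega)]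
            omega
          · right
            rw [hsub, show rx - ry = 1 - A by omega, emod_neg' hP0 (by omega) (by omega)]
            omega
        have hD := tool1 hb
        have habs : |2 * rx - (2 * (ry - A) + 1)| = 1 := by
          have : 2 * rx - (2 * (ry - A) + 1) = 1 ∨ 2 * rx - (2 * (ry - A) + 1) = -1 := by omega
          rcases this with h | h <;> rw [h] <;> norm_num
        rw [habs, one_mul, hkM]
        linarith
      · exact key _ (le_abs.mpr (by omega))
    · rw [if_neg hbx, if_pos hby]
      by_cases hw : ry - rx + A = 0 ∨ ry - rx + A = 1
      · have hb : (x - y) % P = A - 1 ∨ (x - y) % P = A := by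
          rcases hw with h | h
          · right
            rw [hsub, show rx - ry = A by omega, Int.emod_eq_of_lt (by omega) (by omega)]
          · left
            rw [hsub, show rx - ry = A - 1 by omega, Int.emod_eq_of_lt (by omega) (by omega)]
        have hD := tool1 hb
        have habs : |2 * (rx - A) + 1 - 2 * ry| = 1 := by
          have : 2 * (rx - A) + 1 - 2 * ry = 1 ∨ 2 * (rx - A) + 1 - 2 * ry = -1 := by omega
          rcases this with h | h <;> rw [h] <;> norm_num
        rw [habs, one_mul, hkM]
        linarith
      · exact key _ (le_abs.mpr (by omega))
    · rw [if_neg hbx, if_neg hby]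
      by_cases h0 : rx = ry
      · have := tool0 h0
        have h2 : (0:ℤ) ≤ |2 * (rx - A) + 1 - (2 * (ry - A) + 1)| * M :=
          mul_nonneg (abs_nonneg _) hM0
        linarith
      · by_cases h1 : rx - ry = 1 ∨ ry - rx = 1
        · have hD2 := tool2 h1
          have habs : |2 * (rx - A) + 1 - (2 * (ry - A) + 1)| = 2 := by
            have : 2 * (rx - A) + 1 - (2 * (ry - A) + 1) = 2 ∨
                2 * (rx - A) + 1 - (2 * (ry - A) + 1) = -2 := by omega
            rcases this with h | h <;> rw [h] <;> norm_num
          rw [habs, hkM]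
          linarith
        · exact key _ (le_abs.mpr (by omega))
  · intro x
    simp only []
    have hrx0 := hr0 x
    have hrxP := hrP x
    set rx := x % P with hrxdef
    have hgx0 : (0:ℤ) ≤ (if rx < A then 2 * rx else 2 * (rx - A) + 1) * M := by
      apply mul_nonneg _ hM0
      split_ifs with h <;> omega
    have hgub : (if rx < A then 2 * rx else 2 * (rx - A) + 1) * M ≤ (2 * E + 2) * M := by
      apply mul_le_mul_of_nonneg_right _ hM0
      split_ifs with h <;> omega
    have h1 : ((((if rx < A then 2 * rx else 2 * (rx - A) + 1) * M).toNat : ℤ)) ≤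
        (2 * E + 2) * M := by
      rw [Int.toNat_of_nonneg hgx0]
      exact hgub
    have h2 : ((((if rx < A then 2 * rx else 2 * (rx - A) + 1) * M).toNat : ℕ) : ℝ) ≤
        (((2 * E + 2) * M : ℤ) : ℝ) := by exact_mod_cast h1
    refine h2.trans (le_of_eq ?_)
    have hkR : (k : ℝ) = 2 * (m : ℝ) + 1 := by rw [hm]; push_cast; ring
    rw [hEdef, hMdef, hkR]
    push_cast
    ring
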